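/- Let G = (V, E) be a finite directed graph with |V| = n, let Q be a finite alphabet with |Q| = q, and let C be a storage code on G. If S ⊆ V is a set of vertices such that the subgraph of G induced by S contains no directed cycle (a DAG set), then the restriction map C → Q^{V \ S} sending each codeword to its values outside S is injective; consequently |C| ≤ q^{n - |S|}, and hence |C| ≤ q^{n - δ(G)}, where δ(G) is the maximum size of a DAG set in G. -/

import Mathlib

/-- A storage code on a directed graph with vertex set `V` (edge relation `E`)
over the alphabet `Q`: every codeword symbol is a function of the values on the
out-neighborhood of the vertex. -/
def IsStorageCode {V Q : Type*} (E : V → V → Prop) (C : Set (V → Q)) : Prop :=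
  ∀ v : V, ∃ f : (V → Q) → Q,
    (∀ x y : V → Q, (∀ u : V, E v u → x u = y u) → f x = f y) ∧
    ∀ x ∈ C, f x = x v

/-- There is a directed cycle all of whose vertices lie in `S`. -/
def HasCycleIn {V : Type*} (E : V → V → Prop) (S : Set V) : Prop :=
  ∃ (m : ℕ) (f : Fin (m + 1) → V), 0 < m ∧ (∀ i, f i ∈ S) ∧
    f 0 = f (Fin.last m) ∧ ∀ i : Fin m, E (f i.castSucc) (f i.succ)

/-- `S` is a DAG set: the induced subgraph on `S` has no directed cycle. -/
def IsDagSet {V : Type*} (E : V → V → Prop) (S : Set V) : Prop := ¬ HasCycleIn E S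

/-- δ(G): the maximum size of a DAG set. -/
noncomputable def maxDagSize {V : Type*} [Fintype V] (E : V → V → Prop) : ℕ :=
  sSup {k : ℕ | ∃ S : Finset V, IsDagSet E (↑S : Set V) ∧ S.card = k}

/-- On a finite vertex set, the "reverse edge within `S`" relation of a DAG set
is well-founded. -/
lemma dag_wf {V : Type*} [Finite V] {E : V → V → Prop} {S : Set V}
    (hS : IsDagSet E S) :
    WellFounded (fun u v : V => u ∈ S ∧ v ∈ S ∧ E v u) := by
  set R := fun u v : V => u ∈ S ∧ v ∈ S ∧ E v u with hR
  by_contra h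
  obtain ⟨a, ha⟩ : ∃ a, ¬ Acc R a := by
    by_contra h'
    push_neg at h'
    exact h ⟨h'⟩
  have step : ∀ x : {a : V // ¬ Acc R a}, ∃ y : {a : V // ¬ Acc R a}, R y.1 x.1 := by
    rintro ⟨x, hx⟩
    obtain ⟨b, hb1, hb2⟩ := exists_not_acc_lt_of_not_acc hx
    exact ⟨⟨b, hb1⟩, hb2⟩
  choose nxt hnxt using step
  set g : ℕ → {a : V // ¬ Acc R a} := fun n => nxt^[n] ⟨a, ha⟩ with hgdef
  have hg : ∀ n : ℕ, R (↑(g (n + 1))) (↑(g n)) := by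
    intro n
    have : g (n + 1) = nxt (g n) := by
      simp only [hgdef, Function.iterate_succ', Function.comp_apply]
    rw [this]
    exact hnxt _
  obtain ⟨i, j, hij, hgij⟩ := Finite.exists_ne_map_eq_of_infinite (fun n : ℕ => (g n : V))
  -- wlog i < j
  rcases hij.lt_or_gt with hlt | hlt
  case _ =>
    apply hS
    refine ⟨j - i, fun k => (g (i + k.val) : V), Nat.sub_pos_of_lt hlt, ?_, ?_, ?_⟩
    · intro k
      exact (hg (i + k.val)).2.1
    · simp only [Fin.val_zero, Fin.val_last]
      rw [Nat.add_zero, Nat.add_sub_cancel' hlt.le]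
      exact hgij
    · intro k
      have := (hg (i + k.val)).2.2
      simpa [Fin.coe_castSucc, Fin.val_succ, Nat.add_assoc] using this
  case _ =>
    apply hS
    refine ⟨i - j, fun k => (g (j + k.val) : V), Nat.sub_pos_of_lt hlt, ?_, ?_, ?_⟩
    · intro k
      exact (hg (j + k.val)).2.1
    · simp only [Fin.val_zero, Fin.val_last]
      rw [Nat.add_zero, Nat.add_sub_cancel' hlt.le]
      exact hgij.symm
    · intro k
      have := (hg (j + k.val)).2.2
      simpa [Fin.coe_castSucc, Fin.val_succ, Nat.add_assoc] using this

lemma storage_injOn {V Q : Type*} [Finite V] {E : V → V → Prop}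
    {C : Set (V → Q)} (hC : IsStorageCode E C) {S : Set V} (hS : IsDagSet E S) :
    Set.InjOn (fun x : V → Q => fun u : {u : V // u ∉ S} => x u) C := by
  intro x hx y hy hxy
  funext v
  induction v using (dag_wf hS).induction with
  | _ v ih =>
    by_cases hv : v ∈ S
    · obtain ⟨f, hf1, hf2⟩ := hC v
      rw [← hf2 x hx, ← hf2 y hy]
      apply hf1
      intro u hu
      by_cases huS : u ∈ S
      · exact ih u ⟨huS, hv, hu⟩
      · exact congrFun hxy ⟨u, huS⟩
    · exact congrFun hxy ⟨v, hv⟩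

lemma storage_card_le {V Q : Type*} [Fintype V] [Fintype Q] (E : V → V → Prop)
    (C : Finset (V → Q)) (hC : IsStorageCode E (↑C : Set (V → Q)))
    (S : Finset V) (hS : IsDagSet E (↑S : Set V)) :
    C.card ≤ Fintype.card Q ^ (Fintype.card V - S.card) := by
  classical
  have hinj : Set.InjOn (fun x : V → Q => fun u : {u : V // u ∉ S} => x u)
      (↑C : Set (V → Q)) := storage_injOn hC hS
  have h1 : C.card ≤ Fintype.card ({u : V // u ∉ S} → Q) := by
    rw [← Finset.card_univ]
    apply Finset.card_le_card_of_injOn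
      (fun x : V → Q => fun u : {u : V // u ∉ S} => x u)
      (fun a _ => Finset.mem_univ _)
    intro a ha b hb hab
    exact hinj ha hb hab
  refine h1.trans_eq ?_
  rw [Fintype.card_fun]
  congr 1
  have h2 : Fintype.card {u : V // u ∉ S} = Fintype.card V - Fintype.card {u : V // u ∈ S} :=
    Fintype.card_subtype_compl _
  rw [h2, Fintype.card_coe]

theorem stmt0 {V Q : Type*} [Fintype V] [Fintype Q] (E : V → V → Prop)
    (n q : ℕ) (hn : Fintype.card V = n) (hq : Fintype.card Q = q)
    (C : Finset (V → Q)) (hC : IsStorageCode E (↑C : Set (V → Q)))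
    (S : Finset V) (hS : IsDagSet E (↑S : Set V)) :
    Set.InjOn (fun x : V → Q => fun u : {u : V // u ∉ S} => x u) (↑C : Set (V → Q)) ∧
    C.card ≤ q ^ (n - S.card) ∧ C.card ≤ q ^ (n - maxDagSize E) := by
  subst hn hq
  refine ⟨storage_injOn hC hS, storage_card_le E C hC S hS, ?_⟩
  -- the sup is attained
  have hmem : maxDagSize E ∈ {k : ℕ | ∃ S : Finset V, IsDagSet E (↑S : Set V) ∧ S.card = k} := by
    apply Nat.sSup_mem
    · refine ⟨0, ∅, ?_, Finset.card_empty⟩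
      rintro ⟨m, f, hm, hf, -⟩
      exact absurd (hf 0) (by simp)
    · exact ⟨Fintype.card V, by rintro k ⟨T, -, rfl⟩; exact Finset.card_le_univ T⟩
  obtain ⟨T, hT, hTcard⟩ := hmem
  rw [← hTcard]
  exact storage_card_le E C hC T hT
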